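/- Let G be a graph, k a nonnegative integer, and X ⊆ V(G) with |X| = 5 such that the graph induced by G on X is a subgraph of some 5-cycle on the vertex set X. Let k' = k + |E(G[X])| − 5, and let G' be the graph obtained from G by (a) adding all missing edges inside X (so that X becomes a clique), (b) adding a set A of k+2 new vertices, and (c) adding all edges between A and N_G[X] (the closed neighborhood of X in G). Suppose S is a minimal split completion of G' with |S| ≤ k', and let (C, I) be an I-maximal split partition of G'+S. Then: (i) N_G[X] ⊆ C; (ii) A ⊆ I; (iii) no pair in S has an endpoint in A; (iv) in G'+S every vertex of C \ X is adjacent to every vertex of X; and (v) in G'+S no vertex of I \ A is adjacent to any vertex of X. -/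

import Mathlib

open SimpleGraph

universe u

/-- `G + S`: the graph obtained from `G` by adding the pairs in `S` as edges. -/
def completes {V : Type u} (G : SimpleGraph V) (S : Set (Sym2 V)) : SimpleGraph V :=
  G ⊔ SimpleGraph.fromEdgeSet S

/-- `S` is a set of non-edges of `G` (unordered pairs of distinct vertices, none an edge). -/
def IsCompletionSet {V : Type u} (G : SimpleGraph V) (S : Set (Sym2 V)) : Prop :=
  (∀ e ∈ S, ¬ e.IsDiag) ∧ Disjoint S G.edgeSet

/-- `(C, I)` is a split partition of `G`: `C` is a clique, `I` an independent set, and they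
partition the vertex set. -/
def IsSplitPartition {V : Type u} (G : SimpleGraph V) (C I : Set V) : Prop :=
  Disjoint C I ∧ C ∪ I = Set.univ ∧ G.IsClique C ∧ ∀ v ∈ I, ∀ w ∈ I, ¬ G.Adj v w

/-- A split partition `(C, I)` is `I`-maximal if no vertex can be moved from `C` to `I`. -/
def IsIMaximalSplitPartition {V : Type u} (G : SimpleGraph V) (C I : Set V) : Prop :=
  IsSplitPartition G C I ∧ ∀ v ∈ C, ¬ IsSplitPartition G (C \ {v}) (I ∪ {v})

/-- `S` is a minimal split completion of `G`. -/
def IsMinSplitCompletion {V : Type u} (G : SimpleGraph V) (S : Set (Sym2 V)) : Prop :=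
  IsCompletionSet G S ∧ (∃ C I, IsSplitPartition (completes G S) C I) ∧
    ∀ S' ⊂ S, ¬ ∃ C I, IsSplitPartition (completes G S') C I

/-- The closed neighborhood `N_G[X]` of a set of vertices `X`. -/
def closedNbhd {V : Type u} (G : SimpleGraph V) (X : Set V) : Set V :=
  X ∪ {v | ∃ x ∈ X, G.Adj v x}

/-- `G[X]` is a subgraph of some 5-cycle on the vertex set `X`. -/
def SubCycle5 {V : Type u} (G : SimpleGraph V) (X : Set V) : Prop :=
  ∃ f : Fin 5 → V, Function.Injective f ∧ Set.range f = X ∧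
    ∀ i j : Fin 5, G.Adj (f i) (f j) → (SimpleGraph.cycleGraph 5).Adj i j

/-- The number of edges of `G` inside the set `X`. -/
noncomputable def edgesInside {V : Type u} (G : SimpleGraph V) (X : Set V) : ℕ :=
  {e ∈ G.edgeSet | ∀ v ∈ e, v ∈ X}.ncard

/-- The auxiliary graph `G'` of the pseudosplit-completion algorithm: obtained from `G` by
turning `X` into a clique, adding `k + 2` new vertices, and joining each new vertex to all
of `N_G[X]`. -/
def auxGraph {V : Type u} (G : SimpleGraph V) (X : Set V) (k : ℕ) :
    SimpleGraph (V ⊕ Fin (k + 2)) :=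
  SimpleGraph.fromRel (fun u w =>
    match u, w with
    | Sum.inl v, Sum.inl v' => G.Adj v v' ∨ (v ∈ X ∧ v' ∈ X)
    | Sum.inl v, Sum.inr _ => v ∈ closedNbhd G X
    | Sum.inr _, Sum.inl v => v ∈ closedNbhd G X
    | Sum.inr _, Sum.inr _ => False)

section Aux
variable {V : Type u} (G : SimpleGraph V) (X : Set V) (k : ℕ)

lemma aux_adj_inr_inl (a : Fin (k+2)) (v : V) :
    (auxGraph G X k).Adj (Sum.inr a) (Sum.inl v) ↔ v ∈ closedNbhd G X := by
  simp [auxGraph, SimpleGraph.fromRel_adj]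

lemma aux_not_adj_inr_inr (a b : Fin (k+2)) :
    ¬ (auxGraph G X k).Adj (Sum.inr a) (Sum.inr b) := by
  simp [auxGraph, SimpleGraph.fromRel_adj]

lemma aux_adj_inl_inl {v x : V} (hx : x ∈ X)
    (h : (auxGraph G X k).Adj (Sum.inl v) (Sum.inl x)) : v ∈ closedNbhd G X := by
  rw [auxGraph, SimpleGraph.fromRel_adj] at h
  rcases h.2 with (h | h) | (h | h)
  · exact Or.inr ⟨x, hx, h⟩
  · exact Or.inl h.1
  · exact Or.inr ⟨x, hx, h.symm⟩
  · exact Or.inl h.2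

lemma completes_adj (S : Set (Sym2 V)) (u w : V) :
    (completes G S).Adj u w ↔ G.Adj u w ∨ (s(u, w) ∈ S ∧ u ≠ w) := by
  simp [completes, SimpleGraph.fromEdgeSet_adj]

lemma edgesInside_le_five (hXc : SubCycle5 G X) : edgesInside G X ≤ 5 := by
  classical
  obtain ⟨f, hfinj, hfr, hfc⟩ := hXc
  have hfix : ∀ e ∈ {e ∈ G.edgeSet | ∀ v ∈ e, v ∈ X},
      Sym2.map f (Sym2.map (Function.invFun f) e) = e := by
    intro e he
    induction e with
    | _ u v =>
      have hu : u ∈ Set.range f := by rw [hfr]; exact he.2 u (by simp)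
      have hv : v ∈ Set.range f := by rw [hfr]; exact he.2 v (by simp)
      simp only [Sym2.map_pair_eq]
      rw [Function.invFun_eq hu, Function.invFun_eq hv]
  have h1 : edgesInside G X ≤ (SimpleGraph.cycleGraph 5).edgeSet.ncard := by
    apply Set.ncard_le_ncard_of_injOn (Sym2.map (Function.invFun f))
    · rintro e he
      induction e with
      | _ u v =>
        have hu : u ∈ Set.range f := by rw [hfr]; exact he.2 u (by simp)
        have hv : v ∈ Set.range f := by rw [hfr]; exact he.2 v (by simp)
        obtain ⟨i, rfl⟩ := hu
        obtain ⟨j, rfl⟩ := hv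
        have hl := Function.leftInverse_invFun hfinj
        simp only [Sym2.map_pair_eq, hl i, hl j]
        exact (SimpleGraph.cycleGraph 5).mem_edgeSet.mpr (hfc i j (G.mem_edgeSet.mp he.1))
    · intro e he e' he' h
      have h2 := congrArg (Sym2.map f) h
      rwa [hfix e he, hfix e' he'] at h2
  have h2 : (SimpleGraph.cycleGraph 5).edgeSet.ncard = 5 := by
    rw [Set.ncard_eq_toFinset_card', ← SimpleGraph.edgeFinset]
    decide
  omega

end Aux

/-- Properties of any `I`-maximal split partition of a minimal split completion of the
auxiliary graph `G'` of size at most `k' = k + |E(G[X])| - 5`. -/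
theorem auxGraph_minSplitCompletion_structure {V : Type u} [Fintype V]
    (G : SimpleGraph V) (k : ℕ) (X : Set V)
    (hX5 : X.ncard = 5) (hXc : SubCycle5 G X)
    (S : Set (Sym2 (V ⊕ Fin (k + 2))))
    (hS : IsMinSplitCompletion (auxGraph G X k) S)
    (hSk : S.ncard ≤ k + edgesInside G X - 5)
    (C I : Set (V ⊕ Fin (k + 2)))
    (hCI : IsIMaximalSplitPartition (completes (auxGraph G X k) S) C I) :
    (∀ v ∈ closedNbhd G X, Sum.inl v ∈ C) ∧
    (∀ a : Fin (k + 2), Sum.inr a ∈ I) ∧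
    (∀ e ∈ S, ∀ a : Fin (k + 2), (Sum.inr a : V ⊕ Fin (k + 2)) ∉ e) ∧
    (∀ w ∈ C, w ∉ Sum.inl '' X → ∀ x ∈ X,
      (completes (auxGraph G X k) S).Adj w (Sum.inl x)) ∧
    (∀ w ∈ I, w ∉ Set.range (Sum.inr : Fin (k + 2) → V ⊕ Fin (k + 2)) → ∀ x ∈ X,
      ¬ (completes (auxGraph G X k) S).Adj w (Sum.inl x)) := by

  classical
  obtain ⟨⟨hdisj, hcover, hclique, hindep⟩, hmax⟩ := hCI
  obtain ⟨⟨hSdiag, hSE⟩, -, hmin⟩ := hS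
  have hcov' : ∀ x : V ⊕ Fin (k+2), x ∈ C ∨ x ∈ I := fun x => by
    have : x ∈ C ∪ I := hcover.symm ▸ Set.mem_univ x
    exact this
  have hSkk : S.ncard ≤ k := by have := edgesInside_le_five G X hXc; omega
  -- some new vertex lies in I
  have hexI : ∃ a : Fin (k+2), (Sum.inr a : V ⊕ Fin (k+2)) ∈ I := by
    by_contra h
    push_neg at h
    have hAC : ∀ a : Fin (k+2), (Sum.inr a : V ⊕ Fin (k+2)) ∈ C :=
      fun a => (hcov' _).resolve_right (h a)
    set ψ : Fin (k+1) → Sym2 (V ⊕ Fin (k+2)) :=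
      fun i => s(Sum.inr 0, Sum.inr i.succ) with hψ
    have hψS : ∀ i, ψ i ∈ S := by
      intro i
      have hne : (Sum.inr 0 : V ⊕ Fin (k+2)) ≠ Sum.inr i.succ := by
        simp [(Fin.succ_ne_zero i).symm]
      have hadj := hclique (hAC 0) (hAC i.succ) hne
      rw [completes_adj] at hadj
      rcases hadj with hadj | hadj
      · exact absurd hadj (aux_not_adj_inr_inr G X k _ _)
      · exact hadj.1
    have hψinj : Function.Injective ψ := by
      intro i j hij
      rw [hψ] at hij
      simp only [Sym2.eq_iff] at hij
      rcases hij with ⟨-, h2⟩ | ⟨h1, -⟩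
      · exact Fin.succ_injective _ (Sum.inr_injective h2)
      · exact absurd (Sum.inr_injective h1).symm (Fin.succ_ne_zero j)
    have : (Set.range ψ).ncard ≤ S.ncard :=
      Set.ncard_le_ncard (Set.range_subset_iff.mpr hψS) (Set.toFinite S)
    rw [← Set.image_univ, Set.ncard_image_of_injective _ hψinj, Set.ncard_univ,
      Nat.card_eq_fintype_card, Fintype.card_fin] at this
    omega
  -- (i) N[X] ⊆ C
  have hNC : ∀ v ∈ closedNbhd G X, (Sum.inl v : V ⊕ Fin (k+2)) ∈ C := by
    intro v hv
    obtain ⟨a, ha⟩ := hexI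
    have hadj : (completes (auxGraph G X k) S).Adj (Sum.inl v) (Sum.inr a) :=
      (completes_adj _ _ _ _).mpr (Or.inl ((aux_adj_inr_inl G X k a v).mpr hv).symm)
    refine (hcov' _).resolve_right (fun hvI => hindep _ hvI _ ha hadj)
  -- key independence lemma
  have hkey : ∀ u w, (auxGraph G X k).Adj u w →
      u ∈ I ∪ Set.range (Sum.inr : Fin (k+2) → V ⊕ Fin (k+2)) →
      w ∈ I ∪ Set.range (Sum.inr : Fin (k+2) → V ⊕ Fin (k+2)) → False := by
    have step : ∀ u w, (auxGraph G X k).Adj u w →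
        u ∈ I ∪ Set.range (Sum.inr : Fin (k+2) → V ⊕ Fin (k+2)) →
        w ∈ I ∪ Set.range (Sum.inr : Fin (k+2) → V ⊕ Fin (k+2)) →
        (∃ a, u = Sum.inr a) → False := by
      rintro u w hadj hu hw ⟨a, rfl⟩
      cases w with
      | inl v =>
        have hvN : v ∈ closedNbhd G X := (aux_adj_inr_inl G X k a v).mp hadj
        have hvC := hNC v hvN
        rcases hw with hw | ⟨b, hb⟩
        · exact Set.disjoint_left.mp hdisj hvC hw
        · cases hb
      | inr b => exact aux_not_adj_inr_inr G X k a b hadj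
    intro u w hadj hu hw
    cases u with
    | inl v =>
      cases w with
      | inl v' =>
        have huI : Sum.inl v ∈ I := by
          rcases hu with hu | ⟨b, hb⟩
          · exact hu
          · cases hb
        have hwI : Sum.inl v' ∈ I := by
          rcases hw with hw | ⟨b, hb⟩
          · exact hw
          · cases hb
        exact hindep _ huI _ hwI ((completes_adj _ _ _ _).mpr (Or.inl hadj))
      | inr b => exact step _ _ hadj.symm hw hu ⟨b, rfl⟩
    | inr a => exact step _ _ hadj hu hw ⟨a, rfl⟩
  -- (iii) S avoids A
  have hSA : ∀ e ∈ S, ∀ a : Fin (k+2), (Sum.inr a : V ⊕ Fin (k+2)) ∉ e := by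
    by_contra h
    push_neg at h
    obtain ⟨e, heS, a, hae⟩ := h
    set R := Set.range (Sum.inr : Fin (k+2) → V ⊕ Fin (k+2)) with hR
    set S' := {e ∈ S | ∀ a : Fin (k+2), (Sum.inr a : V ⊕ Fin (k+2)) ∉ e} with hS'
    have hsub : S' ⊂ S := by
      rw [Set.ssubset_def]
      exact ⟨fun e' he' => he'.1, fun hcon => (hcon heS).2 a hae⟩
    refine hmin S' hsub ⟨C \ R, I ∪ R, ?_, ?_, ?_, ?_⟩
    · rw [Set.disjoint_left]
      rintro x ⟨hxC, hxR⟩ (hxI | hxR')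
      · exact Set.disjoint_left.mp hdisj hxC hxI
      · exact hxR hxR'
    · apply Set.eq_univ_of_forall
      intro x
      rcases hcov' x with hx | hx
      · by_cases hxR : x ∈ R
        · exact Or.inr (Or.inr hxR)
        · exact Or.inl ⟨hx, hxR⟩
      · exact Or.inr (Or.inl hx)
    · intro u hu w hw hne
      have hadj := hclique hu.1 hw.1 hne
      rw [completes_adj] at hadj ⊢
      rcases hadj with hadj | ⟨hmem, hne'⟩
      · exact Or.inl hadj
      · refine Or.inr ⟨⟨hmem, ?_⟩, hne'⟩
        intro b hb
        rcases Sym2.mem_iff.mp hb with hb | hb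
        · exact hu.2 ⟨b, hb⟩
        · exact hw.2 ⟨b, hb⟩
    · intro u hu w hw hadj
      rw [completes_adj] at hadj
      rcases hadj with hadj | ⟨⟨hmem, hnoA⟩, hne⟩
      · exact hkey u w hadj hu hw
      · have huI : u ∈ I := by
          rcases hu with hu | ⟨b, hb⟩
          · exact hu
          · exact absurd (Sym2.mem_mk_left u w) (hb ▸ hnoA b)
        have hwI : w ∈ I := by
          rcases hw with hw | ⟨b, hb⟩
          · exact hw
          · exact absurd (Sym2.mem_mk_right u w) (hb ▸ hnoA b)
        exact hindep _ huI _ hwI ((completes_adj _ _ _ _).mpr (Or.inr ⟨hmem, hne⟩))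
  -- (ii) A ⊆ I
  have hAI : ∀ a : Fin (k+2), (Sum.inr a : V ⊕ Fin (k+2)) ∈ I := by
    intro a
    by_contra haI
    have haC : (Sum.inr a : V ⊕ Fin (k+2)) ∈ C := (hcov' _).resolve_right haI
    apply hmax _ haC
    have hbno : ∀ w, (completes (auxGraph G X k) S).Adj (Sum.inr a) w →
        w ∈ I ∪ {(Sum.inr a : V ⊕ Fin (k+2))} → False := by
      intro w hadj hw
      rw [completes_adj] at hadj
      rcases hadj with hadj | ⟨hmem, hne⟩
      · cases w with
        | inl v =>
          have hvC := hNC v ((aux_adj_inr_inl G X k a v).mp hadj)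
          rcases hw with hw | hw
          · exact Set.disjoint_left.mp hdisj hvC hw
          · cases (Set.mem_singleton_iff.mp hw)
        | inr b => exact aux_not_adj_inr_inr G X k a b hadj
      · exact hSA _ hmem a (Sym2.mem_mk_left _ _)
    refine ⟨?_, ?_, hclique.subset Set.diff_subset, ?_⟩
    · rw [Set.disjoint_left]
      rintro x ⟨hxC, hxa⟩ (hxI | hxa')
      · exact Set.disjoint_left.mp hdisj hxC hxI
      · exact hxa hxa'
    · apply Set.eq_univ_of_forall
      intro x
      rcases hcov' x with hx | hx
      · by_cases hxa : x ∈ ({(Sum.inr a : V ⊕ Fin (k+2))} : Set _)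
        · exact Or.inr (Or.inr hxa)
        · exact Or.inl ⟨hx, hxa⟩
      · exact Or.inr (Or.inl hx)
    · rintro u hu w hw hadj
      rcases hu with hu | hu
      · rcases hw with hw | hw
        · exact hindep _ hu _ hw hadj
        · rw [Set.mem_singleton_iff] at hw
          subst hw
          exact hbno u hadj.symm (Or.inl hu)
      · rw [Set.mem_singleton_iff] at hu
        subst hu
        exact hbno w hadj hw
  refine ⟨hNC, hAI, hSA, ?_, ?_⟩
  -- (iv)
  · intro w hw hwX x hx
    have hxC : (Sum.inl x : V ⊕ Fin (k+2)) ∈ C := hNC x (Or.inl hx)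
    have hne : w ≠ Sum.inl x := fun h => hwX ⟨x, hx, h.symm⟩
    exact hclique hw hxC hne
  -- (v)
  · intro w hwI hwR x hx hadj
    cases w with
    | inr b => exact hwR ⟨b, rfl⟩
    | inl v =>
      rw [completes_adj] at hadj
      rcases hadj with hadj | ⟨hmem, hne⟩
      · exact Set.disjoint_left.mp hdisj (hNC v (aux_adj_inl_inl G X k hx hadj)) hwI
      · set e : Sym2 (V ⊕ Fin (k+2)) := s(Sum.inl v, Sum.inl x) with he
        have hsub : S \ {e} ⊂ S := Set.diff_singleton_ssubset.mpr hmem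
        refine hmin _ hsub ⟨C, I, hdisj, hcover, ?_, ?_⟩
        · intro u hu u' hu' hne'
          have hadj' := hclique hu hu' hne'
          rw [completes_adj] at hadj' ⊢
          rcases hadj' with hadj' | ⟨hmem', hne''⟩
          · exact Or.inl hadj'
          · refine Or.inr ⟨⟨hmem', ?_⟩, hne''⟩
            rw [Set.mem_singleton_iff]
            intro hcon
            rw [he] at hcon
            rcases Sym2.eq_iff.mp hcon with ⟨h1, -⟩ | ⟨-, h2⟩
            · exact Set.disjoint_left.mp hdisj (h1 ▸ hu) hwI
            · exact Set.disjoint_left.mp hdisj (h2 ▸ hu') hwI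
        · intro u hu u' hu' hadj'
          rw [completes_adj] at hadj'
          rcases hadj' with hadj' | ⟨hmem', hne''⟩
          · exact hindep _ hu _ hu' ((completes_adj _ _ _ _).mpr (Or.inl hadj'))
          · exact hindep _ hu _ hu'
              ((completes_adj _ _ _ _).mpr (Or.inr ⟨hmem'.1, hne''⟩))
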